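/- arXiv:1411.4441 — 6 statements merged into one kernel-verified Lean document; each statement's English description precedes it below -/
import Mathlib

section
/- Every doubly stochastic n×n matrix is a convex combination of permutation matrices (Birkhoff's theorem). -/
open Finset MeasureTheory
open scoped Classical

noncomputable section

/-- Components of `X` sorted in increasing order. -/
def osort {n : ℕ} (X : Fin n → ℝ) : Fin n → ℝ := X ∘ Tuple.sort X

/-- Sum of the `k` smallest components of `X`. -/
def psum {n : ℕ} (X : Fin n → ℝ) (k : ℕ) : ℝ :=
  ∑ j : Fin n, if (j : ℕ) < k then osort X j else 0

/-- `AVaR_{i/n}(X) = (x_[i+1] + ... + x_[n]) / (n - i)`. -/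
def avar {n : ℕ} (X : Fin n → ℝ) (i : ℕ) : ℝ :=
  (∑ j : Fin n, if i ≤ (j : ℕ) then osort X j else 0) / ((n : ℝ) - (i : ℝ))

/-- Cumulative distribution function on the uniform `n`-point space. -/
def cdf {n : ℕ} (X : Fin n → ℝ) (t : ℝ) : ℝ :=
  ((univ.filter fun j => X j ≤ t).card : ℝ) / (n : ℝ)

/-- Value-at-Risk (lower `p`-quantile). -/
def var {n : ℕ} (X : Fin n → ℝ) (p : ℝ) : ℝ :=
  sInf {t : ℝ | p ≤ cdf X t}

/-- `AVaR_α(X) = (1/(1-α)) ∫_α^1 VaR_u(X) du`. -/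
def avarC {n : ℕ} (X : Fin n → ℝ) (α : ℝ) : ℝ :=
  (1 / (1 - α)) * ∫ u in α..1, var X u

/-- Maximum component (essential supremum). -/
def vmax {n : ℕ} (X : Fin n → ℝ) : ℝ := sSup (Set.range X)

/-- Comonotonicity of two random vectors. -/
def Comonotone {n : ℕ} (X Y : Fin n → ℝ) : Prop :=
  ∀ j k, 0 ≤ (X j - X k) * (Y j - Y k)

/-- The permutation matrix of `σ`. -/
def permMat {n : ℕ} (σ : Equiv.Perm (Fin n)) : Matrix (Fin n) (Fin n) ℝ :=
  fun i k => if σ i = k then 1 else 0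

lemma permMat_eq_permMatrix {n : ℕ} (σ : Equiv.Perm (Fin n)) :
    permMat σ = σ.permMatrix ℝ := by
  ext i k
  simp [permMat, Equiv.Perm.permMatrix, PEquiv.toMatrix_apply, Equiv.toPEquiv_apply,
    Option.mem_def, eq_comm]

/-- Birkhoff: every doubly stochastic matrix is a convex
combination of permutation matrices. -/
theorem birkhoff {n : ℕ} (A : Matrix (Fin n) (Fin n) ℝ)
    (h0 : ∀ i j, 0 ≤ A i j) (hrow : ∀ i, ∑ j, A i j = 1)
    (hcol : ∀ j, ∑ i, A i j = 1) :
    ∃ (m : ℕ) (w : Fin m → ℝ) (σ : Fin m → Equiv.Perm (Fin n)),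
      (∀ j, 0 ≤ w j) ∧ (∑ j, w j = 1) ∧ A = ∑ j, w j • permMat (σ j) := by
  have hA : A ∈ doublyStochastic ℝ (Fin n) := by
    rw [mem_doublyStochastic_iff_sum]
    exact ⟨fun i j => h0 i j, hrow, hcol⟩
  obtain ⟨w, hw0, hw1, hwA⟩ := exists_eq_sum_perm_of_mem_doublyStochastic hA
  let e : Fin (Fintype.card (Equiv.Perm (Fin n))) ≃ Equiv.Perm (Fin n) :=
    (Fintype.equivFin (Equiv.Perm (Fin n))).symm
  refine ⟨Fintype.card (Equiv.Perm (Fin n)), fun j => w (e j), fun j => e j,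
    fun j => hw0 _, ?_, ?_⟩
  · rw [← hw1]; exact Fintype.sum_equiv e _ _ (fun j => rfl)
  · rw [← hwA]
    refine (Fintype.sum_equiv e _ _ (fun j => ?_)).symm
    rw [permMat_eq_permMatrix]

end
end

section
/- Let ρ: ℝⁿ → ℝ be monotone (X ≤ Y componentwise implies ρ(X) ≤ ρ(Y)), convex, and permutation invariant (ρ(X∘π) = ρ(X) for every permutation π). If X ≤ AY componentwise for some doubly stochastic matrix A, then ρ(X) ≤ ρ(Y). -/
open Finset MeasureTheory
open scoped Classical

noncomputable section

/-- a monotone, convex, permutation invariant functional is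
monotone along `X ≤ A Y` with `A` doubly stochastic. -/
theorem schur_like_monotonicity {n : ℕ} (ρ : (Fin n → ℝ) → ℝ)
    (hmono : ∀ X Y : Fin n → ℝ, (∀ i, X i ≤ Y i) → ρ X ≤ ρ Y)
    (hconv : ∀ (X Y : Fin n → ℝ) (l : ℝ), 0 ≤ l → l ≤ 1 →
      ρ (fun i => l * X i + (1 - l) * Y i) ≤ l * ρ X + (1 - l) * ρ Y)
    (hperm : ∀ (X : Fin n → ℝ) (π : Equiv.Perm (Fin n)), ρ (X ∘ π) = ρ X)
    (X Y : Fin n → ℝ) (A : Matrix (Fin n) (Fin n) ℝ)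
    (h0 : ∀ i j, 0 ≤ A i j) (hrow : ∀ i, ∑ j, A i j = 1)
    (hcol : ∀ j, ∑ i, A i j = 1)
    (hXY : ∀ i, X i ≤ A.mulVec Y i) :
    ρ X ≤ ρ Y := by
  have hA : A ∈ doublyStochastic ℝ (Fin n) := by
    rw [mem_doublyStochastic_iff_sum]
    exact ⟨h0, hrow, hcol⟩
  obtain ⟨w, hw0, hw1, hwA⟩ := exists_eq_sum_perm_of_mem_doublyStochastic hA
  have hconvOn : ConvexOn ℝ Set.univ ρ := by
    refine ⟨convex_univ, fun x _ y _ a b ha hb hab => ?_⟩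
    have hb' : b = 1 - a := by linarith
    have := hconv x y a ha (by linarith)
    calc ρ (a • x + b • y) = ρ (fun i => a * x i + (1 - a) * y i) := by
          congr 1; funext i; simp [hb']
      _ ≤ a * ρ x + (1 - a) * ρ y := this
      _ = a * ρ x + b * ρ y := by rw [hb']
      _ = a • ρ x + b • ρ y := by simp
  have hmul : A.mulVec Y = ∑ σ : Equiv.Perm (Fin n), w σ • (Y ∘ σ) := by
    rw [← hwA]
    ext i
    simp only [Matrix.mulVec, dotProduct, Matrix.sum_apply, Matrix.smul_apply,
      Equiv.Perm.permMatrix, PEquiv.toMatrix_apply, smul_eq_mul,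
      Finset.sum_apply, Pi.smul_apply, Function.comp_apply]
    simp_rw [Finset.sum_mul, mul_ite, mul_one, mul_zero, ite_mul, zero_mul]
    rw [Finset.sum_comm]
    simp [Option.mem_def]
  calc ρ X ≤ ρ (A.mulVec Y) := hmono _ _ hXY
    _ = ρ (∑ σ : Equiv.Perm (Fin n), w σ • (Y ∘ σ)) := by rw [hmul]
    _ ≤ ∑ σ : Equiv.Perm (Fin n), w σ * ρ (Y ∘ σ) :=
        hconvOn.map_sum_le (fun σ _ => hw0 σ) hw1 (fun σ _ => Set.mem_univ _)
    _ = ∑ σ : Equiv.Perm (Fin n), w σ * ρ Y := by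
        simp_rw [hperm]
    _ = ρ Y := by rw [← Finset.sum_mul, hw1, one_mul]

end
end

section
/- For a random variable X on the uniform discrete n-point space and (i−1)/n ≤ α ≤ i/n, setting λ = (n(1−α) − (n−i+1)(i−nα))/(n(1−α)), one has 0 ≤ λ ≤ 1 and AVaR_α(X) = λ·AVaR_{i/n}(X) + (1−λ)·AVaR_{(i−1)/n}(X). -/
open Finset MeasureTheory
open scoped Classical

noncomputable section

/- ---------- auxiliary lemmas ---------- -/

lemma card_perm {n : ℕ} (σ : Equiv.Perm (Fin n)) (p : Fin n → Prop) [DecidablePred p] :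
    (univ.filter fun j => p (σ j)).card = (univ.filter p).card := by
  apply Finset.card_bij (fun j _ => σ j)
  · intro a ha; simp only [mem_filter, mem_univ, true_and] at ha ⊢; exact ha
  · intro a _ b _ h; exact σ.injective h
  · intro b hb; refine ⟨σ.symm b, ?_, by simp⟩
    simp only [mem_filter, mem_univ, true_and] at hb ⊢; simpa using hb

lemma div_cast_le {a b : ℕ} {n : ℕ} (h : a ≤ b) : (a:ℝ)/n ≤ (b:ℝ)/n := by
  rcases Nat.eq_zero_or_pos n with h0 | h0
  · simp [h0]
  · exact (div_le_div_iff_of_pos_right (show (0:ℝ) < n by exact_mod_cast h0)).mpr (by exact_mod_cast h)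

lemma cdf_mono {n : ℕ} (X : Fin n → ℝ) : Monotone (cdf X) := by
  intro s t hst
  unfold cdf
  apply div_cast_le
  exact Finset.card_le_card (by
      intro j hj; simp only [mem_filter, mem_univ, true_and] at hj ⊢; linarith)

lemma cdf_osort_ge {n : ℕ} (X : Fin n → ℝ) (k : Fin n) :
    ((k : ℕ) + 1 : ℝ) / n ≤ cdf X (osort X k) := by
  unfold cdf
  rw [show (((k:ℕ):ℝ) + 1) = (((k:ℕ) + 1 : ℕ) : ℝ) by push_cast; ring]
  apply div_cast_le
  have h1 : (univ.filter fun j => X j ≤ osort X k).card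
      = (univ.filter fun j : Fin n => osort X j ≤ osort X k).card :=
    (card_perm (Tuple.sort X) (fun j => X j ≤ osort X k)).symm
  rw [h1]
  have h2 : Finset.Iic k ⊆ univ.filter fun j : Fin n => osort X j ≤ osort X k := by
    intro j hj
    simp only [mem_filter, mem_univ, true_and]
    exact Tuple.monotone_sort X (Finset.mem_Iic.mp hj)
  calc (k:ℕ) + 1 = (Finset.Iic k).card := (Fin.card_Iic k).symm
    _ ≤ _ := Finset.card_le_card h2

lemma cdf_lt_osort {n : ℕ} (X : Fin n → ℝ) (k : Fin n) {t : ℝ} (ht : t < osort X k) :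
    cdf X t ≤ ((k : ℕ) : ℝ) / n := by
  unfold cdf
  apply div_cast_le
  have h1 : (univ.filter fun j => X j ≤ t).card
      = (univ.filter fun j : Fin n => osort X j ≤ t).card :=
    (card_perm (Tuple.sort X) (fun j => X j ≤ t)).symm
  rw [h1]
  have h2 : (univ.filter fun j : Fin n => osort X j ≤ t) ⊆ Finset.Iio k := by
    intro j hj
    simp only [mem_filter, mem_univ, true_and] at hj
    rw [Finset.mem_Iio]
    by_contra hc
    exact absurd (le_trans (Tuple.monotone_sort X (not_lt.mp hc)) hj) (not_le.mpr ht)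
  calc _ ≤ (Finset.Iio k).card := Finset.card_le_card h2
    _ = (k:ℕ) := Fin.card_Iio k

lemma var_eq {n : ℕ} (X : Fin n → ℝ) (k : Fin n) {u : ℝ}
    (h1 : ((k:ℕ):ℝ)/n < u) (h2 : u ≤ (((k:ℕ):ℝ)+1)/n) :
    var X u = osort X k := by
  have hset : {t : ℝ | u ≤ cdf X t} = Set.Ici (osort X k) := by
    ext t
    simp only [Set.mem_setOf_eq, Set.mem_Ici]
    constructor
    · intro h
      by_contra hc
      exact absurd (le_trans h (cdf_lt_osort X k (not_le.mp hc))) (not_le.mpr h1)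
    · intro h
      exact le_trans (le_trans h2 (cdf_osort_ge X k)) (cdf_mono X h)
  rw [var, hset, csInf_Ici]

lemma piece_integrable {f : ℝ → ℝ} {a b c : ℝ} (hab : a ≤ b)
    (h : ∀ x ∈ Set.Ioc a b, f x = c) : IntervalIntegrable f volume a b := by
  rw [intervalIntegrable_iff_integrableOn_Ioc_of_le hab]
  have hc : IntegrableOn (fun _ : ℝ => c) (Set.Ioc a b) volume :=
    (integrableOn_const_iff).mpr (Or.inr (measure_Ioc_lt_top))
  exact hc.congr_fun (fun x hx => (h x hx).symm) measurableSet_Ioc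

lemma piece_integral {f : ℝ → ℝ} {a b c : ℝ} (hab : a ≤ b)
    (h : ∀ x ∈ Set.Ioc a b, f x = c) : ∫ x in a..b, f x = (b - a) * c := by
  rw [intervalIntegral.integral_congr_ae (g := fun _ => c)
    (Filter.Eventually.of_forall (fun x hx => h x (by rwa [Set.uIoc_of_le hab] at hx)))]
  simp [intervalIntegral.integral_const, smul_eq_mul]

/-- `AVaR_α` interpolates linearly between the grid values
`AVaR_{(i-1)/n}` and `AVaR_{i/n}`. -/
theorem avar_interpolation {n : ℕ} (i : ℕ) (hi1 : 1 ≤ i) (hi2 : i ≤ n - 1)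
    (α : ℝ) (hα1 : ((i : ℝ) - 1) / (n : ℝ) ≤ α) (hα2 : α ≤ (i : ℝ) / (n : ℝ))
    (X : Fin n → ℝ) :
    0 ≤ ((n : ℝ) * (1 - α) - ((n : ℝ) - (i : ℝ) + 1) * ((i : ℝ) - (n : ℝ) * α)) /
        ((n : ℝ) * (1 - α)) ∧
    ((n : ℝ) * (1 - α) - ((n : ℝ) - (i : ℝ) + 1) * ((i : ℝ) - (n : ℝ) * α)) /
        ((n : ℝ) * (1 - α)) ≤ 1 ∧
    avarC X α =
      (((n : ℝ) * (1 - α) - ((n : ℝ) - (i : ℝ) + 1) * ((i : ℝ) - (n : ℝ) * α)) /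
        ((n : ℝ) * (1 - α))) * avar X i +
      (1 - ((n : ℝ) * (1 - α) - ((n : ℝ) - (i : ℝ) + 1) * ((i : ℝ) - (n : ℝ) * α)) /
        ((n : ℝ) * (1 - α))) * avar X (i - 1) := by
  have hin : i + 1 ≤ n := by omega
  have hnR : (0:ℝ) < n := by exact_mod_cast (show 0 < n by omega)
  have hiR : (i:ℝ) + 1 ≤ n := by exact_mod_cast hin
  have hα1' : (i:ℝ) - 1 ≤ (n:ℝ) * α := by
    rw [div_le_iff₀ hnR] at hα1; linarith
  have hα2' : (n:ℝ) * α ≤ i := by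
    rw [le_div_iff₀ hnR] at hα2; linarith
  have h1α : 0 < 1 - α := by nlinarith
  have hβ0 : 0 ≤ (i:ℝ) - (n:ℝ) * α := by linarith
  have hβ1 : (i:ℝ) - (n:ℝ) * α ≤ 1 := by linarith
  have hniR : (0:ℝ) < (n:ℝ) - i := by linarith
  have hdenom : (0:ℝ) < (n:ℝ) * (1 - α) := mul_pos hnR h1α
  refine ⟨?_, ?_, ?_⟩
  · apply div_nonneg _ hdenom.le
    nlinarith [mul_nonneg hniR.le (by linarith : (0:ℝ) ≤ 1 - ((i:ℝ) - (n:ℝ)*α))]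
  · rw [div_le_one hdenom]
    nlinarith [mul_nonneg (by linarith : (0:ℝ) ≤ (n:ℝ) - i + 1) hβ0]
  -- main computation
  set f : ℕ → ℝ := fun m => if h : m < n then osort X ⟨m, h⟩ else 0 with hf
  have hil : i - 1 < n := by omega
  have hcast : ((i - 1 : ℕ) : ℝ) = (i:ℝ) - 1 := by
    push_cast [hi1]; ring
  -- first piece
  have hαi : α ≤ (i:ℝ)/n := hα2
  have hI1val : ∀ x ∈ Set.Ioc α ((i:ℝ)/n), var X x = f (i - 1) := by
    intro x hx
    simp only [hf]
    rw [dif_pos hil]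
    apply var_eq X ⟨i-1, hil⟩
    · show ((((⟨i-1,hil⟩ : Fin n):ℕ)):ℝ)/n < x
      have : (((⟨i-1,hil⟩ : Fin n):ℕ):ℝ) = (i:ℝ) - 1 := hcast
      rw [this]
      calc ((i:ℝ)-1)/n ≤ α := hα1
        _ < x := hx.1
    · show x ≤ ((((⟨i-1,hil⟩ : Fin n):ℕ):ℝ)+1)/n
      have : (((⟨i-1,hil⟩ : Fin n):ℕ):ℝ) = (i:ℝ) - 1 := hcast
      rw [this]
      calc x ≤ (i:ℝ)/n := hx.2
        _ = ((i:ℝ)-1+1)/n := by ring_nf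
  have hI1 : ∫ x in α..((i:ℝ)/n), var X x = ((i:ℝ)/n - α) * f (i - 1) :=
    piece_integral hαi hI1val
  have hI1int : IntervalIntegrable (var X) volume α ((i:ℝ)/n) :=
    piece_integrable hαi hI1val
  -- grid pieces
  set a : ℕ → ℝ := fun k => ((i + k : ℕ):ℝ)/n with ha
  have hamono : ∀ k : ℕ, a k ≤ a (k+1) := by
    intro k; rw [ha]; exact div_cast_le (by omega)
  have hpieceval : ∀ k < n - i, ∀ x ∈ Set.Ioc (a k) (a (k+1)), var X x = f (i + k) := by
    intro k hk x hx
    have hkn : i + k < n := by omega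
    simp only [hf]
    rw [dif_pos hkn]
    apply var_eq X ⟨i+k, hkn⟩
    · show ((((⟨i+k,hkn⟩ : Fin n):ℕ)):ℝ)/n < x
      have h1 : ((((⟨i+k,hkn⟩ : Fin n):ℕ)):ℝ)/n = a k := by rw [ha]
      rw [h1]; exact hx.1
    · show x ≤ (((((⟨i+k,hkn⟩ : Fin n):ℕ)):ℝ)+1)/n
      have h1 : (((((⟨i+k,hkn⟩ : Fin n):ℕ)):ℝ)+1)/n = a (k+1) := by
        rw [ha]; push_cast; ring
      rw [h1]; exact hx.2
  have hint : ∀ k < n - i, IntervalIntegrable (var X) volume (a k) (a (k+1)) :=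
    fun k hk => piece_integrable (hamono k) (hpieceval k hk)
  have hsum : ∑ k ∈ range (n - i), ∫ x in a k..a (k+1), var X x
      = ∫ x in (a 0)..(a (n-i)), var X x :=
    intervalIntegral.sum_integral_adjacent_intervals hint
  have ha0 : a 0 = (i:ℝ)/n := by rw [ha]; norm_num
  have hani : a (n-i) = 1 := by
    show ((i + (n - i) : ℕ):ℝ)/n = 1
    rw [show i + (n - i) = n from by omega]
    exact div_self hnR.ne'
  have hpiece : ∀ k ∈ range (n - i),
      ∫ x in a k..a (k+1), var X x = (1/(n:ℝ)) * f (i + k) := by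
    intro k hk
    rw [piece_integral (hamono k) (hpieceval k (mem_range.mp hk))]
    congr 1
    rw [ha]; push_cast; ring
  have hI2 : ∫ x in ((i:ℝ)/n)..1, var X x = ∑ k ∈ range (n-i), (1/(n:ℝ)) * f (i + k) :=
    calc ∫ x in ((i:ℝ)/n)..1, var X x = ∫ x in (a 0)..(a (n-i)), var X x := by rw [ha0, hani]
      _ = ∑ k ∈ range (n-i), ∫ x in (a k)..(a (k+1)), var X x := hsum.symm
      _ = ∑ k ∈ range (n-i), (1/(n:ℝ)) * f (i + k) := Finset.sum_congr rfl hpiece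
  have hint2 : IntervalIntegrable (var X) volume ((i:ℝ)/n) 1 := by
    have h := IntervalIntegrable.trans_iterate (a := a) (n := n - i) hint
    rwa [ha0, hani] at h
  have hsplit : ∫ x in α..1, var X x
      = (∫ x in α..((i:ℝ)/n), var X x) + ∫ x in ((i:ℝ)/n)..1, var X x :=
    (intervalIntegral.integral_add_adjacent_intervals hI1int hint2).symm
  -- sums
  set T : ℝ := ∑ j : Fin n, if i ≤ (j : ℕ) then osort X j else 0 with hTdef
  have hfin : ∀ j : Fin n, f (j:ℕ) = osort X j := by
    intro j
    simp only [hf]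
    rw [dif_pos j.isLt]
  have hrange : ∀ m : ℕ, T = ∑ mm ∈ Finset.Ico m n,  f mm → True := fun _ _ => trivial
  have hTrange : ∀ m : ℕ, (∑ j : Fin n, if m ≤ (j : ℕ) then osort X j else 0)
      = ∑ mm ∈ Finset.Ico m n, f mm := by
    intro m
    have h1 : (∑ j : Fin n, if m ≤ (j : ℕ) then osort X j else 0)
        = ∑ j : Fin n, (fun mm : ℕ => if m ≤ mm then f mm else 0) (j:ℕ) := by
      apply Finset.sum_congr rfl
      intro j _
      simp only [hfin j]
    rw [h1, Fin.sum_univ_eq_sum_range (fun mm : ℕ => if m ≤ mm then f mm else 0) n]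
    rw [← Finset.sum_filter]
    congr 1
    ext mm
    simp only [Finset.mem_filter, Finset.mem_range, Finset.mem_Ico]
    omega
  have hT : ∑ k ∈ range (n - i), f (i + k) = T := by
    rw [hTdef, hTrange i, ← Finset.sum_Ico_eq_sum_range]
  have hS : (∑ j : Fin n, if i - 1 ≤ (j : ℕ) then osort X j else 0) = f (i-1) + T := by
    rw [hTrange (i-1), hTdef, hTrange i]
    rw [Finset.sum_eq_sum_Ico_succ_bot (show i - 1 < n by omega) f,
        show i - 1 + 1 = i from by omega]
  -- put it together
  have hInt : ∫ x in α..1, var X x = ((i:ℝ)/n - α) * f (i - 1) + (1/(n:ℝ)) * T := by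
    rw [hsplit, hI1, hI2, ← Finset.mul_sum, hT]
  have havari : avar X i = T / ((n:ℝ) - i) := by rw [avar]
  have havari1 : avar X (i-1) = (f (i-1) + T) / ((n:ℝ) - ((i:ℝ) - 1)) := by
    rw [avar, hS, hcast]
  rw [avarC, hInt, havari, havari1]
  have h2 : (n:ℝ) - ((i:ℝ) - 1) ≠ 0 := by linarith
  field_simp
  ring
end
end

section
/- For each α ∈ [0,1), AVaR_α on the uniform discrete n-point space is a coherent risk measure: monotone, positively homogeneous, convex (equivalently subadditive), and translation invariant. -/
open Finset MeasureTheory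
open scoped Classical

noncomputable section

namespace AvarAux

variable {n : ℕ}

lemma osort_monotone (X : Fin n → ℝ) : Monotone (osort X) :=
  Tuple.monotone_sort X

lemma count_osort (X : Fin n → ℝ) (t : ℝ) :
    (univ.filter fun j => osort X j ≤ t).card = (univ.filter fun j => X j ≤ t).card := by
  apply Finset.card_bij (fun j _ => Tuple.sort X j)
  · intro a ha
    simp only [mem_filter, mem_univ, true_and, osort, Function.comp] at ha ⊢
    exact (Finset.mem_filter.mp ha).2
  · intro a _ b _ h
    exact (Tuple.sort X).injective h
  · intro b hb
    refine ⟨(Tuple.sort X).symm b, ?_, by simp⟩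
    simp only [mem_filter, mem_univ, true_and, osort, Function.comp, Equiv.apply_symm_apply] at hb ⊢
    exact Finset.mem_filter.mpr ⟨mem_univ _, by simpa using hb⟩

lemma count_iff (X : Fin n → ℝ) (i : Fin n) (t : ℝ) :
    osort X i ≤ t ↔ (i : ℕ) + 1 ≤ (univ.filter fun j => X j ≤ t).card := by
  rw [← count_osort X t]
  constructor
  · intro h
    calc (i : ℕ) + 1 = (Finset.Iic i).card := (Fin.card_Iic i).symm
      _ ≤ _ := by
        apply Finset.card_le_card
        intro j hj
        simp only [Finset.mem_Iic] at hj
        simp only [mem_filter, mem_univ, true_and]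
        exact le_trans (osort_monotone X hj) h
  · intro h
    by_contra hlt
    push_neg at hlt
    have hsub : (univ.filter fun j => osort X j ≤ t) ⊆ Finset.Iio i := by
      intro j hj
      simp only [mem_filter, mem_univ, true_and] at hj
      simp only [Finset.mem_Iio]
      by_contra hji
      push_neg at hji
      exact absurd (le_trans (osort_monotone X hji) hj) (not_le.mpr hlt)
    have := Finset.card_le_card hsub
    rw [Fin.card_Iio] at this
    omega

lemma set_eq (X : Fin n → ℝ) (i : Fin n) (p : ℝ)
    (h1 : (i : ℝ) / n < p) (h2 : p ≤ ((i : ℕ) + 1) / n) :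
    {t : ℝ | p ≤ cdf X t} = Set.Ici (osort X i) := by
  have hn : (0 : ℝ) < n := by exact_mod_cast i.pos
  ext t
  simp only [Set.mem_setOf_eq, Set.mem_Ici, cdf]
  rw [count_iff X i t]
  constructor
  · intro h
    have h' : p * n ≤ ((univ.filter fun j => X j ≤ t).card : ℝ) := by
      rwa [le_div_iff₀ hn] at h
    have hi : (i : ℝ) < ((univ.filter fun j => X j ≤ t).card : ℝ) := by
      have : (i : ℝ) < p * n := by rwa [div_lt_iff₀ hn] at h1
      linarith
    exact_mod_cast Nat.lt_iff_add_one_le.mp (by exact_mod_cast hi)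
  · intro h
    have h' : ((i : ℕ) : ℝ) + 1 ≤ ((univ.filter fun j => X j ≤ t).card : ℝ) := by
      exact_mod_cast h
    rw [le_div_iff₀ hn] at h2 ⊢
    linarith

lemma var_eq (X : Fin n → ℝ) (i : Fin n) (p : ℝ)
    (h1 : (i : ℝ) / n < p) (h2 : p ≤ ((i : ℕ) + 1) / n) :
    var X p = osort X i := by
  rw [var, set_eq X i p h1 h2, csInf_Ici]

end AvarAux

namespace AvarAux

variable {n : ℕ}

lemma hp1 (i : Fin n) : (i : ℝ) / n < ((i : ℕ) + 1) / n := by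
  have hn : (0 : ℝ) < n := by exact_mod_cast i.pos
  gcongr
  · linarith
lemma osort_mono (X Y : Fin n → ℝ) (hXY : ∀ j, X j ≤ Y j) (i : Fin n) :
    osort X i ≤ osort Y i := by
  have hn : (0 : ℝ) < n := by exact_mod_cast i.pos
  have h1 : (i : ℝ) / n < ((i : ℕ) + 1) / n := hp1 i
  have hx := set_eq X i (((i : ℕ) + 1) / (n:ℝ)) h1 le_rfl
  have hy := set_eq Y i (((i : ℕ) + 1) / (n:ℝ)) h1 le_rfl
  have hmem : osort Y i ∈ {t : ℝ | ((i : ℕ) + 1) / (n:ℝ) ≤ cdf Y t} := by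
    rw [hy]; exact Set.self_mem_Ici
  have hsub : {t : ℝ | ((i : ℕ) + 1) / (n:ℝ) ≤ cdf Y t} ⊆ {t | ((i : ℕ) + 1) / (n:ℝ) ≤ cdf X t} := by
    intro t ht
    simp only [Set.mem_setOf_eq] at ht ⊢
    refine le_trans ht ?_
    unfold cdf
    gcongr
    exact hXY _
  have := hsub hmem
  rw [hx] at this
  exact this

end AvarAux
end

noncomputable section
namespace AvarAux
variable {n : ℕ}

lemma cdf_smul (X : Fin n → ℝ) (l : ℝ) (hl : 0 < l) (t : ℝ) :
    cdf (fun j => l * X j) t = cdf X (t / l) := by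
  unfold cdf
  have : (univ.filter fun j => (fun j => l * X j) j ≤ t) = univ.filter fun j => X j ≤ t / l := by
    apply Finset.filter_congr
    intro j _
    simp [le_div_iff₀ hl, mul_comm]
  rw [this]

lemma cdf_add (X : Fin n → ℝ) (c : ℝ) (t : ℝ) :
    cdf (fun j => X j + c) t = cdf X (t - c) := by
  unfold cdf
  have : (univ.filter fun j => (fun j => X j + c) j ≤ t) = univ.filter fun j => X j ≤ t - c := by
    apply Finset.filter_congr
    intro j _
    simp [le_sub_iff_add_le]
  rw [this]

lemma osort_smul (X : Fin n → ℝ) (l : ℝ) (hl : 0 < l) (i : Fin n) :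
    osort (fun j => l * X j) i = l * osort X i := by
  have h1 : (i : ℝ) / n < ((i : ℕ) + 1) / n := hp1 i
  have hx := set_eq (fun j => l * X j) i (((i : ℕ) + 1) / (n:ℝ)) h1 le_rfl
  have hy := set_eq X i (((i : ℕ) + 1) / (n:ℝ)) h1 le_rfl
  have key : Set.Ici (osort (fun j => l * X j) i) = Set.Ici (l * osort X i) := by
    rw [← hx]
    ext t
    have hmem := Set.ext_iff.mp hy (t / l)
    simp only [Set.mem_setOf_eq, Set.mem_Ici] at hmem ⊢
    rw [cdf_smul X l hl, hmem, le_div_iff₀ hl, mul_comm]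
  exact Set.Ici_injective key

lemma osort_add (X : Fin n → ℝ) (c : ℝ) (i : Fin n) :
    osort (fun j => X j + c) i = osort X i + c := by
  have h1 : (i : ℝ) / n < ((i : ℕ) + 1) / n := hp1 i
  have hx := set_eq (fun j => X j + c) i (((i : ℕ) + 1) / (n:ℝ)) h1 le_rfl
  have hy := set_eq X i (((i : ℕ) + 1) / (n:ℝ)) h1 le_rfl
  have key : Set.Ici (osort (fun j => X j + c) i) = Set.Ici (osort X i + c) := by
    rw [← hx]
    ext t
    have hmem := Set.ext_iff.mp hy (t - c)
    simp only [Set.mem_setOf_eq, Set.mem_Ici] at hmem ⊢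
    rw [cdf_add X c, hmem, le_sub_iff_add_le]
  exact Set.Ici_injective key

end AvarAux

namespace AvarAux

def aPt (n : ℕ) (α : ℝ) (k : ℕ) : ℝ := max α ((k : ℝ) / n)

def wgt (n : ℕ) (α : ℝ) (j : Fin n) : ℝ := aPt n α ((j : ℕ) + 1) - aPt n α (j : ℕ)

variable {n : ℕ}

lemma aPt_mono (α : ℝ) : Monotone (aPt n α) := by
  intro i j hij
  apply max_le_max le_rfl
  rcases Nat.eq_zero_or_pos n with h | h
  · simp [h]
  · gcongr <;> exact_mod_cast hij

lemma wgt_nonneg (α : ℝ) (j : Fin n) : 0 ≤ wgt n α j :=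
  sub_nonneg.mpr (aPt_mono α (Nat.le_succ _))

section
variable (hn : 0 < n) (α : ℝ) (hα0 : 0 ≤ α) (hα1 : α < 1)

include hn in
lemma var_piece (X : Fin n → ℝ) (k : ℕ) (hk : k < n) (hα0 : 0 ≤ α) :
    ∀ u ∈ Set.uIoc (aPt n α k) (aPt n α (k + 1)), var X u = osort X ⟨k, hk⟩ := by
  intro u hu
  have hle : aPt n α k ≤ aPt n α (k + 1) := aPt_mono α (Nat.le_succ _)
  rw [Set.uIoc_of_le hle] at hu
  obtain ⟨h1, h2⟩ := hu
  have hN : (0 : ℝ) < n := by exact_mod_cast hn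
  rcases le_or_gt α (((k : ℝ) + 1) / n) with h | h
  · have e2 : aPt n α (k + 1) = ((k : ℝ) + 1) / n := by
      rw [aPt, max_eq_right]; · push_cast; try ring_nf
      · push_cast; exact h
    apply var_eq X ⟨k, hk⟩ u
    · exact lt_of_le_of_lt (le_max_right _ _) h1
    · rw [e2] at h2; exact_mod_cast h2
  · exfalso
    have e1 : aPt n α k = α := max_eq_left (by
      refine le_trans ?_ h.le
      gcongr
      linarith)
    have e2 : aPt n α (k + 1) = α := max_eq_left (by push_cast; exact h.le)
    rw [e1] at h1; rw [e2] at h2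
    linarith

include hn in
lemma var_intable (X : Fin n → ℝ) (hα0 : 0 ≤ α) (k : ℕ) (hk : k < n) :
    IntervalIntegrable (var X) volume (aPt n α k) (aPt n α (k + 1)) := by
  rw [intervalIntegrable_iff]
  have hc : IntegrableOn (fun _ : ℝ => osort X ⟨k, hk⟩) (Set.uIoc (aPt n α k) (aPt n α (k + 1))) volume :=
    integrableOn_const measure_Ioc_lt_top.ne
  exact hc.congr_fun (fun u hu => (var_piece hn α X k hk hα0 u hu).symm) measurableSet_uIoc

include hn hα0 hα1 in
lemma integral_master (X : Fin n → ℝ) :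
    ∫ u in α..1, var X u = ∑ j : Fin n, wgt n α j * osort X j := by
  have hint : ∀ k < n, IntervalIntegrable (var X) volume (aPt n α k) (aPt n α (k + 1)) :=
    fun k hk => var_intable hn α X hα0 k hk
  have hsum := intervalIntegral.sum_integral_adjacent_intervals hint
  have h0 : aPt n α 0 = α := by simp [aPt, hα0]
  have hnn : aPt n α n = 1 := by
    have : ((n : ℝ)) / n = 1 := div_self (by positivity)
    simp [aPt, this, hα1.le]
  rw [h0, hnn] at hsum
  rw [← hsum, ← Fin.sum_univ_eq_sum_range (fun k => ∫ u in aPt n α k..aPt n α (k + 1), var X u)]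
  apply Finset.sum_congr rfl
  intro j _
  have hpc : ∫ u in aPt n α (j : ℕ)..aPt n α ((j : ℕ) + 1), var X u
      = (aPt n α ((j : ℕ) + 1) - aPt n α (j : ℕ)) • osort X ⟨(j : ℕ), j.isLt⟩ := by
    rw [intervalIntegral.integral_congr_ae
      (MeasureTheory.ae_of_all _ (var_piece hn α X (j : ℕ) j.isLt hα0)),
      intervalIntegral.integral_const]
  rw [hpc, smul_eq_mul, wgt]

include hn hα0 hα1 in
lemma sum_wgt : ∑ j : Fin n, wgt n α j = 1 - α := by
  have h0 : aPt n α 0 = α := by simp [aPt, hα0]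
  have hnn : aPt n α n = 1 := by
    have : ((n : ℝ)) / n = 1 := div_self (by positivity)
    simp [aPt, this, hα1.le]
  simp only [wgt]
  rw [Fin.sum_univ_eq_sum_range (fun k => aPt n α (k + 1) - aPt n α k),
    Finset.sum_range_sub (aPt n α), h0, hnn]

include hn in
lemma wgt_mono (hα0 : 0 ≤ α) : Monotone (wgt n α) := by
  have hN : (0 : ℝ) < n := by exact_mod_cast hn
  have key : ∀ i j : ℕ, i ≤ j →
      aPt n α (i + 1) - aPt n α i ≤ aPt n α (j + 1) - aPt n α j := by
    intro i j hij
    have hstep : ∀ m : ℕ, ((m : ℝ) + 1) / n - (m : ℝ) / n = 1 / n := by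
      intro m; field_simp; ring
    rcases le_or_gt α ((i : ℝ) / n) with h | h
    · have eij : (i : ℝ) / n ≤ (j : ℝ) / n := by gcongr <;> exact_mod_cast hij
      have e1 : aPt n α i = (i : ℝ) / n := max_eq_right h
      have e2 : aPt n α (i + 1) = ((i : ℝ) + 1) / n := by
        rw [aPt, max_eq_right (le_trans h (by gcongr <;> linarith))]; push_cast; try ring_nf
      have e3 : aPt n α j = (j : ℝ) / n := max_eq_right (h.trans eij)
      have e4 : aPt n α (j + 1) = ((j : ℝ) + 1) / n := by
        rw [aPt, max_eq_right (le_trans (h.trans eij) (by gcongr <;> linarith))]; push_cast; try ring_nf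
      rw [e1, e2, e3, e4, hstep i, hstep j]
    · rcases eq_or_lt_of_le hij with rfl | hlt
      · exact le_rfl
      rcases le_or_gt α (((i : ℝ) + 1) / n) with h2 | h2
      · have hij1 : ((i : ℝ) + 1) / n ≤ (j : ℝ) / n := by
          gcongr ?_ / _
          · exact_mod_cast hlt
        have e1 : aPt n α i = α := max_eq_left h.le
        have e2 : aPt n α (i + 1) = ((i : ℝ) + 1) / n := by
          rw [aPt, max_eq_right (by push_cast; exact h2)]; push_cast; try ring_nf
        have e3 : aPt n α j = (j : ℝ) / n := max_eq_right (h2.trans hij1)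
        have e4 : aPt n α (j + 1) = ((j : ℝ) + 1) / n := by
          rw [aPt, max_eq_right (le_trans (h2.trans hij1) (by gcongr <;> linarith))]
          push_cast; try ring_nf
        rw [e1, e2, e3, e4, hstep j]
        have := hstep i
        linarith
      · have e1 : aPt n α i = α := max_eq_left h.le
        have e2 : aPt n α (i + 1) = α := max_eq_left (by push_cast; exact h2.le)
        rw [e1, e2, sub_self]
        exact sub_nonneg.mpr (aPt_mono α (Nat.le_succ _))
  intro i j hij
  exact key (i : ℕ) (j : ℕ) (by exact_mod_cast hij)

end
end AvarAux


namespace AvarAux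
variable {n : ℕ}

lemma rearrange (hn : 0 < n) (α : ℝ) (hα0 : 0 ≤ α) (σ : Equiv.Perm (Fin n))
    (V : Fin n → ℝ) :
    ∑ j : Fin n, wgt n α j * V (σ j) ≤ ∑ j : Fin n, wgt n α j * osort V j := by
  set π : Equiv.Perm (Fin n) := σ.trans (Tuple.sort V).symm with hπ
  have hVσ : ∀ j, V (σ j) = osort V (π j) := by
    intro j
    simp [osort, hπ, Function.comp]
  calc ∑ j : Fin n, wgt n α j * V (σ j)
      = ∑ j : Fin n, wgt n α j • osort V (π j) := by
        simp only [hVσ, smul_eq_mul]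
    _ ≤ ∑ j : Fin n, wgt n α j • osort V j :=
        Monovary.sum_smul_comp_perm_le_sum_smul
          ((wgt_mono hn α hα0).monovary (osort_monotone V))
    _ = ∑ j : Fin n, wgt n α j * osort V j := by simp [smul_eq_mul]

end AvarAux

open AvarAux in
/-- `AVaR_α` is a coherent risk measure for every `α ∈ [0,1)`. -/
theorem avar_coherent {n : ℕ} (hn : 0 < n) (α : ℝ) (hα0 : 0 ≤ α) (hα1 : α < 1) :
    (∀ X Y : Fin n → ℝ, (∀ j, X j ≤ Y j) → avarC X α ≤ avarC Y α) ∧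
    (∀ (X : Fin n → ℝ) (l : ℝ), 0 < l → avarC (fun j => l * X j) α = l * avarC X α) ∧
    (∀ X Y : Fin n → ℝ, avarC (fun j => X j + Y j) α ≤ avarC X α + avarC Y α) ∧
    (∀ (X : Fin n → ℝ) (c : ℝ), avarC (fun j => X j + c) α = avarC X α + c) := by
  have hc : (0 : ℝ) < 1 - α := by linarith
  have hc' : (0 : ℝ) ≤ 1 / (1 - α) := by positivity
  have hrep : ∀ X : Fin n → ℝ,
      avarC X α = (1 / (1 - α)) * ∑ j : Fin n, wgt n α j * osort X j := by
    intro X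
    rw [avarC, integral_master hn α hα0 hα1 X]
  refine ⟨?_, ?_, ?_, ?_⟩
  · intro X Y hXY
    rw [hrep X, hrep Y]
    apply mul_le_mul_of_nonneg_left ?_ hc'
    apply Finset.sum_le_sum
    intro j _
    exact mul_le_mul_of_nonneg_left (osort_mono X Y hXY j) (wgt_nonneg α j)
  · intro X l hl
    rw [hrep X, hrep (fun j => l * X j)]
    have : ∀ j : Fin n, osort (fun j => l * X j) j = l * osort X j :=
      osort_smul X l hl
    simp only [this]
    have hs : ∑ x : Fin n, wgt n α x * (l * osort X x)
        = l * ∑ x : Fin n, wgt n α x * osort X x := by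
      rw [Finset.mul_sum]
      exact Finset.sum_congr rfl (fun j _ => by ring)
    rw [hs]
    ring
  · intro X Y
    rw [hrep X, hrep Y, hrep (fun j => X j + Y j)]
    rw [← mul_add]
    apply mul_le_mul_of_nonneg_left ?_ hc'
    set σ := Tuple.sort (fun j => X j + Y j) with hσ
    have hZ : ∀ j : Fin n, osort (fun j => X j + Y j) j = X (σ j) + Y (σ j) := by
      intro j; rfl
    calc ∑ j : Fin n, wgt n α j * osort (fun j => X j + Y j) j
        = ∑ j : Fin n, (wgt n α j * X (σ j) + wgt n α j * Y (σ j)) := by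
          simp only [hZ, mul_add]
      _ = (∑ j : Fin n, wgt n α j * X (σ j)) + ∑ j : Fin n, wgt n α j * Y (σ j) :=
          Finset.sum_add_distrib
      _ ≤ _ := add_le_add (rearrange hn α hα0 σ X) (rearrange hn α hα0 σ Y)
  · intro X c
    rw [hrep X, hrep (fun j => X j + c)]
    have : ∀ j : Fin n, osort (fun j => X j + c) j = osort X j + c :=
      osort_add X c
    simp only [this, mul_add]
    rw [Finset.sum_add_distrib, ← Finset.sum_mul, sum_wgt hn α hα0 hα1, mul_add]
    congr 1
    rw [mul_comm (1 - α) c, ← mul_assoc]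
    field_simp

end
end

section
/- For each α ∈ [0,1) and 0 ≤ i ≤ n−1 with α = i/n, AVaR_{i/n} on the uniform discrete n-point space is comonotone additive: if X, Y ∈ ℝⁿ satisfy (xⱼ − x_k)(yⱼ − y_k) ≥ 0 for all j, k, then AVaR_{i/n}(X + Y) = AVaR_{i/n}(X) + AVaR_{i/n}(Y). -/
open Finset MeasureTheory
open scoped Classical

noncomputable section

/-- `AVaR_{i/n}` is comonotone additive for `0 ≤ i ≤ n-1`. -/
theorem avar_comonotone_additive {n : ℕ} (i : ℕ) (hi : i < n)
    (X Y : Fin n → ℝ) (hcom : Comonotone X Y) :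
    avar (fun j => X j + Y j) i = avar X i + avar Y i := by
  set Z : Fin n → ℝ := fun j => X j + Y j with hZdef
  set σ : Equiv.Perm (Fin n) := Tuple.sort Z with hσ
  have hZ : Monotone (Z ∘ σ) := Tuple.monotone_sort Z
  have hX : Monotone (X ∘ σ) := by
    intro a b hab
    by_contra h
    push_neg at h
    simp only [Function.comp] at h
    have hy : Y (σ b) ≤ Y (σ a) := by
      have := hcom (σ a) (σ b)
      nlinarith
    have hz := hZ hab
    simp only [Function.comp, hZdef] at hz
    linarith
  have hY : Monotone (Y ∘ σ) := by
    intro a b hab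
    by_contra h
    push_neg at h
    simp only [Function.comp] at h
    have hx : X (σ b) ≤ X (σ a) := by
      have := hcom (σ a) (σ b)
      nlinarith
    have hz := hZ hab
    simp only [Function.comp, hZdef] at hz
    linarith
  have hXeq : X ∘ σ = X ∘ Tuple.sort X := Tuple.comp_sort_eq_comp_iff_monotone.mpr hX
  have hYeq : Y ∘ σ = Y ∘ Tuple.sort Y := Tuple.comp_sort_eq_comp_iff_monotone.mpr hY
  have hpoint : ∀ j, osort Z j = osort X j + osort Y j := by
    intro j
    have hx := congrFun hXeq j
    have hy := congrFun hYeq j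
    simp only [Function.comp] at hx hy
    simp [osort, hZdef, ← hx, ← hy, hσ]
  unfold avar
  rw [← add_div]
  congr 1
  rw [← Finset.sum_add_distrib]
  apply Finset.sum_congr rfl
  intro j _
  rw [hpoint j]
  split_ifs <;> simp

end
end

section
/- Any convex combination of the measures AVaR_{i/n}, i = 0,...,n−1, on the uniform discrete n-point space, ρ(X) = ∑_{i=0}^{n−1} μᵢ AVaR_{i/n}(X) with μᵢ ≥ 0 and ∑μᵢ = 1, is a coherent, law invariant (permutation invariant), and comonotone additive risk measure. -/
open Finset MeasureTheory
open scoped Classical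

noncomputable section

def tailset (n i : ℕ) : Finset (Fin n) := univ.filter fun j => i ≤ (j : ℕ)

def tsum' {n : ℕ} (X : Fin n → ℝ) (i : ℕ) : ℝ := ∑ j ∈ tailset n i, osort X j

lemma tsum'_eq {n : ℕ} (X : Fin n → ℝ) (i : ℕ) :
    (∑ j : Fin n, if i ≤ (j : ℕ) then osort X j else 0) = tsum' X i := by
  rw [tsum', tailset, Finset.sum_filter]

lemma card_tailset {n i : ℕ} (hi : i ≤ n) : (tailset n i).card = n - i := by
  classical
  have hemb : Function.Injective (fun k : Fin (n - i) => (⟨i + (k : ℕ), by have := k.isLt; omega⟩ : Fin n)) := by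
    intro a b h
    have : i + (a : ℕ) = i + (b : ℕ) := congrArg Fin.val h
    exact Fin.ext (by omega)
  have : tailset n i =
      (univ : Finset (Fin (n - i))).map ⟨_, hemb⟩ := by
    ext j
    simp only [tailset, mem_filter, mem_univ, true_and, mem_map, Function.Embedding.coeFn_mk]
    constructor
    · intro hj
      exact ⟨⟨(j : ℕ) - i, by have := j.isLt; omega⟩, by simp [Fin.ext_iff]; omega⟩
    · rintro ⟨k, rfl⟩; simp
  rw [this, card_map, card_univ, Fintype.card_fin]

lemma sum_subset_le_tail_mono {n i : ℕ} (hi : i ≤ n) (g : Fin n → ℝ) (hg : Monotone g)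
    (T : Finset (Fin n)) (hT : T.card = n - i) :
    ∑ j ∈ T, g j ≤ ∑ j ∈ tailset n i, g j := by
  classical
  set A := tailset n i with hA
  have hAcard : A.card = n - i := card_tailset hi
  have h1 : (T \ A).card + (T ∩ A).card = T.card := Finset.card_sdiff_add_card_inter T A
  have h2 : (A \ T).card + (A ∩ T).card = A.card := Finset.card_sdiff_add_card_inter A T
  have hint : (T ∩ A).card = (A ∩ T).card := by rw [Finset.inter_comm]
  have hcard : (T \ A).card = (A \ T).card := by omega
  have e : (T \ A : Finset (Fin n)) ≃ (A \ T : Finset (Fin n)) := Finset.equivOfCardEq hcard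
  have key : ∑ j ∈ T \ A, g j ≤ ∑ j ∈ A \ T, g j := by
    rw [← Finset.sum_coe_sort (T \ A) g, ← Finset.sum_coe_sort (A \ T) g]
    rw [← Equiv.sum_comp e (fun x : (A \ T : Finset (Fin n)) => g (x : Fin n))]
    apply Finset.sum_le_sum
    intro x _
    apply hg
    have hx : (x : Fin n) ∈ T \ A := x.2
    have hex : ((e x : Fin n)) ∈ A \ T := (e x).2
    have hx' : ¬ i ≤ ((x : Fin n) : ℕ) := by
      have := (Finset.mem_sdiff.mp hx).2
      simpa [hA, tailset] using this
    have hex' : i ≤ (((e x : Fin n)) : ℕ) := by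
      have := (Finset.mem_sdiff.mp hex).1
      simpa [hA, tailset] using this
    exact Fin.le_def.mpr (by omega)
  have hT' : ∑ j ∈ T ∩ A, g j + ∑ j ∈ T \ A, g j = ∑ j ∈ T, g j :=
    Finset.sum_inter_add_sum_sdiff T A g
  have hA' : ∑ j ∈ A ∩ T, g j + ∑ j ∈ A \ T, g j = ∑ j ∈ A, g j :=
    Finset.sum_inter_add_sum_sdiff A T g
  have : ∑ j ∈ T ∩ A, g j = ∑ j ∈ A ∩ T, g j := by rw [Finset.inter_comm]
  linarith

lemma sum_subset_le {n i : ℕ} (hi : i ≤ n) (X : Fin n → ℝ)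
    (T : Finset (Fin n)) (hT : T.card = n - i) :
    ∑ j ∈ T, X j ≤ tsum' X i := by
  classical
  set σ := Tuple.sort X with hσ
  have hX : ∀ j, X j = osort X (σ.symm j) := by
    intro j; simp [osort, hσ]
  calc ∑ j ∈ T, X j = ∑ j ∈ T, osort X (σ.symm j) := by
        exact Finset.sum_congr rfl fun j _ => hX j
    _ = ∑ t ∈ T.image σ.symm, osort X t := by
        rw [Finset.sum_image (fun a _ b _ h => σ.symm.injective h)]
    _ ≤ ∑ j ∈ tailset n i, osort X j := by
        apply sum_subset_le_tail_mono hi _ (Tuple.monotone_sort X)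
        rw [Finset.card_image_of_injective _ σ.symm.injective, hT]

lemma attainset_card {n i : ℕ} (hi : i ≤ n) (X : Fin n → ℝ) :
    ((tailset n i).image (Tuple.sort X)).card = n - i := by
  rw [Finset.card_image_of_injective _ (Tuple.sort X).injective, card_tailset hi]

lemma attain_sum {n i : ℕ} (X Z : Fin n → ℝ) :
    ∑ j ∈ (tailset n i).image (Tuple.sort X), Z j
      = ∑ j ∈ tailset n i, Z (Tuple.sort X j) := by
  rw [Finset.sum_image (fun a _ b _ h => (Tuple.sort X).injective h)]

lemma tsum'_mono {n i : ℕ} (hi : i ≤ n) {X Y : Fin n → ℝ} (h : ∀ j, X j ≤ Y j) :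
    tsum' X i ≤ tsum' Y i := by
  have h1 : tsum' X i = ∑ j ∈ (tailset n i).image (Tuple.sort X), X j := by
    rw [attain_sum]; rfl
  rw [h1]
  calc ∑ j ∈ (tailset n i).image (Tuple.sort X), X j
      ≤ ∑ j ∈ (tailset n i).image (Tuple.sort X), Y j :=
        Finset.sum_le_sum fun j _ => h j
    _ ≤ tsum' Y i := sum_subset_le hi Y _ (attainset_card hi X)

lemma tsum'_add_le {n i : ℕ} (hi : i ≤ n) (X Y : Fin n → ℝ) :
    tsum' (fun j => X j + Y j) i ≤ tsum' X i + tsum' Y i := by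
  set Z : Fin n → ℝ := fun j => X j + Y j with hZ
  have h1 : tsum' Z i = ∑ j ∈ (tailset n i).image (Tuple.sort Z), Z j := by
    rw [attain_sum]; rfl
  rw [h1]
  have h2 : ∑ j ∈ (tailset n i).image (Tuple.sort Z), Z j
      = (∑ j ∈ (tailset n i).image (Tuple.sort Z), X j)
        + ∑ j ∈ (tailset n i).image (Tuple.sort Z), Y j := by
    rw [← Finset.sum_add_distrib]
  rw [h2]
  exact add_le_add (sum_subset_le hi X _ (attainset_card hi Z))
    (sum_subset_le hi Y _ (attainset_card hi Z))

lemma osort_smul {n : ℕ} (X : Fin n → ℝ) {l : ℝ} (hl : 0 ≤ l) :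
    osort (fun j => l * X j) = fun j => l * osort X j := by
  have hm : Monotone ((fun j => l * X j) ∘ Tuple.sort X) := by
    intro a b hab
    exact mul_le_mul_of_nonneg_left (Tuple.monotone_sort X hab) hl
  have := Tuple.comp_sort_eq_comp_iff_monotone.mpr hm
  rw [osort, ← this]; rfl

lemma osort_add_const {n : ℕ} (X : Fin n → ℝ) (c : ℝ) :
    osort (fun j => X j + c) = fun j => osort X j + c := by
  have hm : Monotone ((fun j => X j + c) ∘ Tuple.sort X) := by
    intro a b hab
    exact add_le_add_left (Tuple.monotone_sort X hab) c
  have := Tuple.comp_sort_eq_comp_iff_monotone.mpr hm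
  rw [osort, ← this]; rfl

lemma osort_perm {n : ℕ} (X : Fin n → ℝ) (π : Equiv.Perm (Fin n)) :
    osort (X ∘ π) = osort X :=
  Tuple.comp_perm_comp_sort_eq_comp_sort

lemma osort_comonotone_add {n : ℕ} {X Y : Fin n → ℝ} (h : Comonotone X Y) :
    osort (fun j => X j + Y j) = fun j => osort X j + osort Y j := by
  set Z : Fin n → ℝ := fun j => X j + Y j with hZ
  set σ := Tuple.sort Z with hσ
  have hZm : Monotone (Z ∘ σ) := Tuple.monotone_sort Z
  have hXm : Monotone (X ∘ σ) := by
    intro a b hab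
    by_contra hc
    push_neg at hc
    have h1 := h (σ a) (σ b)
    have h2 : Z (σ a) ≤ Z (σ b) := hZm hab
    simp only [hZ] at h2
    simp only [Function.comp_apply] at hc
    nlinarith
  have hYm : Monotone (Y ∘ σ) := by
    intro a b hab
    by_contra hc
    push_neg at hc
    have h1 := h (σ a) (σ b)
    have h2 : Z (σ a) ≤ Z (σ b) := hZm hab
    simp only [hZ] at h2
    simp only [Function.comp_apply] at hc
    nlinarith
  have hX : X ∘ σ = osort X := Tuple.comp_sort_eq_comp_iff_monotone.mpr hXm
  have hY : Y ∘ σ = osort Y := Tuple.comp_sort_eq_comp_iff_monotone.mpr hYm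
  funext j
  have : osort Z j = X (σ j) + Y (σ j) := rfl
  rw [this, ← hX, ← hY]; rfl

lemma avar_eq {n : ℕ} (X : Fin n → ℝ) (i : ℕ) :
    avar X i = tsum' X i / ((n : ℝ) - (i : ℝ)) := by
  rw [avar, tsum'_eq]

lemma npos {n : ℕ} (i : Fin n) : (0 : ℝ) < (n : ℝ) - (i : ℕ) := by
  have := i.isLt
  have : ((i : ℕ) : ℝ) < (n : ℝ) := by exact_mod_cast this
  linarith


lemma tsum'_smul {n : ℕ} (X : Fin n → ℝ) {l : ℝ} (hl : 0 ≤ l) (i : ℕ) :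
    tsum' (fun j => l * X j) i = l * tsum' X i := by
  rw [tsum', tsum', osort_smul X hl, Finset.mul_sum]

lemma tsum'_const_add {n : ℕ} (X : Fin n → ℝ) (c : ℝ) {i : ℕ} (hi : i ≤ n) :
    tsum' (fun j => X j + c) i = tsum' X i + ((n : ℝ) - (i : ℝ)) * c := by
  rw [tsum', tsum', osort_add_const X c, Finset.sum_add_distrib, Finset.sum_const,
    card_tailset hi, nsmul_eq_mul]
  congr 2
  push_cast [Nat.cast_sub hi]
  ring

/-- any convex combination of `AVaR_{i/n}`, `i = 0,...,n-1`, is a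
coherent, permutation invariant, comonotone additive risk measure. -/
theorem convex_combination_avar_coherent {n : ℕ} (hn : 0 < n)
    (μ : Fin n → ℝ) (hμ0 : ∀ i, 0 ≤ μ i) (hμ1 : ∑ i, μ i = 1) :
    (∀ X Y : Fin n → ℝ, (∀ j, X j ≤ Y j) →
      (∑ i : Fin n, μ i * avar X i) ≤ ∑ i : Fin n, μ i * avar Y i) ∧
    (∀ (X : Fin n → ℝ) (l : ℝ), 0 < l →
      (∑ i : Fin n, μ i * avar (fun j => l * X j) i) = l * ∑ i : Fin n, μ i * avar X i) ∧
    (∀ X Y : Fin n → ℝ,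
      (∑ i : Fin n, μ i * avar (fun j => X j + Y j) i) ≤
        (∑ i : Fin n, μ i * avar X i) + ∑ i : Fin n, μ i * avar Y i) ∧
    (∀ (X : Fin n → ℝ) (c : ℝ),
      (∑ i : Fin n, μ i * avar (fun j => X j + c) i) = (∑ i : Fin n, μ i * avar X i) + c) ∧
    (∀ (X : Fin n → ℝ) (π : Equiv.Perm (Fin n)),
      (∑ i : Fin n, μ i * avar (X ∘ π) i) = ∑ i : Fin n, μ i * avar X i) ∧
    (∀ X Y : Fin n → ℝ, Comonotone X Y →
      (∑ i : Fin n, μ i * avar (fun j => X j + Y j) i) =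
        (∑ i : Fin n, μ i * avar X i) + ∑ i : Fin n, μ i * avar Y i) := by
  have hle : ∀ i : Fin n, (i : ℕ) ≤ n := fun i => i.isLt.le
  refine ⟨?_, ?_, ?_, ?_, ?_, ?_⟩
  · -- monotonicity
    intro X Y h
    apply Finset.sum_le_sum
    intro i _
    have h1 : tsum' X (i : ℕ) ≤ tsum' Y (i : ℕ) := tsum'_mono (hle i) h
    have h2 : (0 : ℝ) < (n : ℝ) - (i : ℕ) := npos i
    rw [avar_eq, avar_eq]
    have := hμ0 i
    gcongr
  · -- positive homogeneity
    intro X l hl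
    rw [Finset.mul_sum]
    apply Finset.sum_congr rfl
    intro i _
    rw [avar_eq, avar_eq, tsum'_smul X hl.le, mul_div_assoc]
    ring
  · -- subadditivity
    intro X Y
    rw [← Finset.sum_add_distrib]
    apply Finset.sum_le_sum
    intro i _
    have h2 : (0 : ℝ) < (n : ℝ) - (i : ℕ) := npos i
    have h1 : avar (fun j => X j + Y j) (i : ℕ) ≤ avar X (i : ℕ) + avar Y (i : ℕ) := by
      rw [avar_eq, avar_eq, avar_eq, ← add_div]
      have := tsum'_add_le (hle i) X Y
      gcongr
    calc μ i * avar (fun j => X j + Y j) (i : ℕ)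
        ≤ μ i * (avar X (i : ℕ) + avar Y (i : ℕ)) := mul_le_mul_of_nonneg_left h1 (hμ0 i)
      _ = μ i * avar X (i : ℕ) + μ i * avar Y (i : ℕ) := mul_add _ _ _
  · -- translation invariance
    intro X c
    have key : ∀ i : Fin n, avar (fun j => X j + c) (i : ℕ) = avar X (i : ℕ) + c := by
      intro i
      have h2 : ((n : ℝ) - (i : ℕ)) ≠ 0 := (npos i).ne'
      rw [avar_eq, avar_eq, tsum'_const_add X c (hle i), add_div,
        mul_comm, mul_div_assoc, div_self h2, mul_one]
    calc ∑ i : Fin n, μ i * avar (fun j => X j + c) (i : ℕ)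
        = ∑ i : Fin n, (μ i * avar X (i : ℕ) + μ i * c) := by
          apply Finset.sum_congr rfl
          intro i _
          rw [key i, mul_add]
      _ = (∑ i : Fin n, μ i * avar X (i : ℕ)) + (∑ i : Fin n, μ i) * c := by
          rw [Finset.sum_add_distrib, Finset.sum_mul]
      _ = (∑ i : Fin n, μ i * avar X (i : ℕ)) + c := by rw [hμ1, one_mul]
  · -- permutation invariance
    intro X π
    apply Finset.sum_congr rfl
    intro i _
    congr 1
    rw [avar, avar, osort_perm]
  · -- comonotone additivity
    intro X Y h
    have key : ∀ i : Fin n,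
        avar (fun j => X j + Y j) (i : ℕ) = avar X (i : ℕ) + avar Y (i : ℕ) := by
      intro i
      rw [avar_eq, avar_eq, avar_eq, ← add_div]
      congr 1
      rw [tsum', tsum', tsum', osort_comonotone_add h, ← Finset.sum_add_distrib]
    calc ∑ i : Fin n, μ i * avar (fun j => X j + Y j) (i : ℕ)
        = ∑ i : Fin n, (μ i * avar X (i : ℕ) + μ i * avar Y (i : ℕ)) := by
          apply Finset.sum_congr rfl
          intro i _
          rw [key i, mul_add]
      _ = _ := Finset.sum_add_distrib


end
end
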